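/- Let G be a finite connected simple graph on n vertices with edge weights w : E(G) → ℝ, and let T be a spanning tree of G of minimum total weight. Then for every real threshold t, the number of edges of T having weight at most t equals n minus the number of connected components of the spanning subgraph G_{≤t}; equivalently, two vertices lie in the same connected component of the subgraph of T consisting of its edges of weight at most t if and only if they lie in the same connected component of G_{≤t}. -/

import Mathlib

open SimpleGraph Finset
open scoped Classical

/-- The threshold graph `G_{≤ t}`: the spanning subgraph of `G` consisting of the
edges of weight at most `t`. -/
noncomputable def levelGraph {V : Type*} (G : SimpleGraph V) (w : Sym2 V → ℝ) (t : ℝ) :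
    SimpleGraph V :=
  SimpleGraph.fromEdgeSet {e ∈ G.edgeSet | w e ≤ t}

lemma lg_adj {V : Type*} {G : SimpleGraph V} {w : Sym2 V → ℝ} {t : ℝ} {x y : V} :
    (levelGraph G w t).Adj x y ↔ G.Adj x y ∧ w s(x,y) ≤ t := by
  constructor
  · rintro ⟨⟨h1, h2⟩, h3⟩
    exact ⟨h1, h2⟩
  · rintro ⟨h1, h2⟩
    exact ⟨⟨h1, h2⟩, h1.ne⟩

lemma reach_split {V : Type*} {H : SimpleGraph V} {a b x y : V}
    (h : H.Reachable x y) :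
    (H \ fromEdgeSet {s(a,b)}).Reachable x y ∨
    ((H \ fromEdgeSet {s(a,b)}).Reachable x a ∧ (H \ fromEdgeSet {s(a,b)}).Reachable b y) ∨
    ((H \ fromEdgeSet {s(a,b)}).Reachable x b ∧ (H \ fromEdgeSet {s(a,b)}).Reachable a y) := by
  set H' := H \ fromEdgeSet {s(a,b)} with hH'
  obtain ⟨p⟩ := h
  induction p with
  | nil => exact Or.inl (Reachable.refl _)
  | @cons x z y hxz p ih =>
    by_cases he : s(x, z) = s(a, b)
    · rw [Sym2.eq_iff] at he
      rcases he with ⟨rfl, rfl⟩ | ⟨rfl, rfl⟩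
      · rcases ih with h1 | ⟨h1, h2⟩ | ⟨h1, h2⟩
        · exact Or.inr (Or.inl ⟨Reachable.refl _, h1⟩)
        · exact Or.inl (h1.symm.trans h2)
        · exact Or.inl h2
      · rcases ih with h1 | ⟨h1, h2⟩ | ⟨h1, h2⟩
        · exact Or.inr (Or.inr ⟨Reachable.refl _, h1⟩)
        · exact Or.inl h2
        · exact Or.inl (h1.symm.trans h2)
    · have hadj : H'.Adj x z := by
        rw [hH', SimpleGraph.sdiff_adj]
        refine ⟨hxz, ?_⟩
        rw [SimpleGraph.fromEdgeSet_adj]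
        rintro ⟨hmem, -⟩
        exact he (Set.mem_singleton_iff.mp hmem)
      rcases ih with h1 | ⟨h1, h2⟩ | ⟨h1, h2⟩
      · exact Or.inl (hadj.reachable.trans h1)
      · exact Or.inr (Or.inl ⟨hadj.reachable.trans h1, h2⟩)
      · exact Or.inr (Or.inr ⟨hadj.reachable.trans h1, h2⟩)


lemma card_cc_sdiff {V : Type*} [Fintype V] {H : SimpleGraph V} {a b : V} (hab : H.Adj a b)
    (hbridge : ¬ (H \ fromEdgeSet {s(a,b)}).Reachable a b)
    (hsplit : ∀ x y : V, H.Reachable x y →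
      (H \ fromEdgeSet {s(a,b)}).Reachable x y ∨
      ((H \ fromEdgeSet {s(a,b)}).Reachable x a ∧ (H \ fromEdgeSet {s(a,b)}).Reachable b y) ∨
      ((H \ fromEdgeSet {s(a,b)}).Reachable x b ∧ (H \ fromEdgeSet {s(a,b)}).Reachable a y)) :
    Nat.card (H \ fromEdgeSet {s(a,b)}).ConnectedComponent
      = Nat.card H.ConnectedComponent + 1 := by
  set H' := H \ fromEdgeSet {s(a,b)} with hH'
  have hle : H' ≤ H := sdiff_le
  set cm : V → H.ConnectedComponent := H.connectedComponentMk with hcm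
  set cm' : V → H'.ConnectedComponent := H'.connectedComponentMk with hcm'
  have hmono : ∀ {x y : V}, H'.Reachable x y → H.Reachable x y := fun h => h.mono hle
  set φ : H.ConnectedComponent ⊕ Unit → H'.ConnectedComponent :=
    fun s => Sum.elim (fun c => if c = cm a then cm' a else cm' c.out) (fun _ => cm' b) s with hφ
  have hout : ∀ c : H.ConnectedComponent, cm c.out = c := fun c => c.out_eq
  have hinj : Function.Injective φ := by
    rintro (c | u) (d | u') h
    · -- inl inl
      have key : ∀ e : H.ConnectedComponent,
          (if e = cm a then cm' a else cm' e.out).map (Hom.ofLE hle) = e := by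
        intro e
        by_cases he : e = cm a
        · simp [he, ConnectedComponent.map_mk]
          rfl
        · simp only [if_neg he, ConnectedComponent.map_mk]
          exact hout e
      have := congrArg (ConnectedComponent.map (Hom.ofLE hle)) h
      simp only [hφ, Sum.elim_inl] at this
      rw [key c, key d] at this
      rw [this]
    · -- inl inr : φ (inl c) = cm' b
      exfalso
      simp only [hφ, Sum.elim_inl, Sum.elim_inr] at h
      by_cases hc : c = cm a
      · rw [if_pos hc] at h
        exact hbridge (ConnectedComponent.exact h)
      · rw [if_neg hc] at h
        have : H.Reachable c.out b := hmono (ConnectedComponent.exact h)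
        have : cm c.out = cm b := ConnectedComponent.sound this
        rw [hout c] at this
        exact hc (this.trans (ConnectedComponent.sound hab.reachable).symm)
    · -- inr inl
      exfalso
      simp only [hφ, Sum.elim_inl, Sum.elim_inr] at h
      by_cases hc : d = cm a
      · rw [if_pos hc] at h
        exact hbridge (ConnectedComponent.exact h.symm)
      · rw [if_neg hc] at h
        have : H.Reachable d.out b := hmono (ConnectedComponent.exact h.symm)
        have : cm d.out = cm b := ConnectedComponent.sound this
        rw [hout d] at this
        exact hc (this.trans (ConnectedComponent.sound hab.reachable).symm)
    · rw [Unit.ext u u']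
  have hsurj : Function.Surjective φ := by
    intro d
    induction d using ConnectedComponent.ind with
    | _ x =>
    by_cases hxb : cm' x = cm' b
    · exact ⟨Sum.inr (), hxb.symm⟩
    refine ⟨Sum.inl (cm x), ?_⟩
    simp only [hφ, Sum.elim_inl]
    by_cases hca : cm x = cm a
    · rw [if_pos hca]
      have hr : H.Reachable x a := ConnectedComponent.exact hca
      rcases hsplit x a hr with h1 | ⟨h1, _⟩ | ⟨h1, _⟩
      · exact (ConnectedComponent.sound h1).symm
      · exact (ConnectedComponent.sound h1).symm
      · exact absurd (ConnectedComponent.sound h1) hxb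
    · rw [if_neg hca]
      have hr : H.Reachable (cm x).out x := by
        have := hout (cm x)
        exact ConnectedComponent.exact this
      rcases hsplit _ _ hr with h1 | ⟨h1, _⟩ | ⟨h1, _⟩
      · exact ConnectedComponent.sound h1
      · exfalso
        have : cm (cm x).out = cm a := ConnectedComponent.sound (hmono h1)
        rw [hout] at this
        exact hca this
      · exfalso
        have : cm (cm x).out = cm b := ConnectedComponent.sound (hmono h1)
        rw [hout] at this
        exact hca (this.trans (ConnectedComponent.sound hab.reachable).symm)
  have e := Equiv.ofBijective φ ⟨hinj, hsurj⟩
  have hc := Nat.card_congr e.symm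
  rw [hc, Nat.card_sum]
  simp
lemma isAcyclic_anti {V : Type*} {A B : SimpleGraph V} (h : A ≤ B) (hB : B.IsAcyclic) :
    A.IsAcyclic := by
  intro v c hc
  exact hB (c.mapLe h) (hc.mapLe h)

lemma bot_cc_card {V : Type*} [Fintype V] :
    Nat.card (⊥ : SimpleGraph V).ConnectedComponent = Fintype.card V := by
  have hbij : Function.Bijective ((⊥ : SimpleGraph V).connectedComponentMk) := by
    constructor
    · intro x y h
      exact reachable_bot.mp (ConnectedComponent.exact h)
    · intro c
      induction c using ConnectedComponent.ind with
      | _ v => exact ⟨v, rfl⟩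
  rw [← Nat.card_congr (Equiv.ofBijective _ hbij), Nat.card_eq_fintype_card]

lemma edgeSet_sdiff_single {V : Type*} {H : SimpleGraph V} {a b : V}
    (hab : H.Adj a b) :
    (H \ fromEdgeSet {s(a,b)}).edgeSet = H.edgeSet \ {s(a,b)} := by
  rw [edgeSet_sdiff, edgeSet_fromEdgeSet]
  ext e
  simp only [Set.mem_diff, Set.mem_singleton_iff, Set.mem_setOf_eq]
  constructor
  · rintro ⟨h1, h2⟩
    refine ⟨h1, fun h => h2 ⟨h, ?_⟩⟩
    rw [h]
    exact H.not_isDiag_of_mem_edgeSet ((H.mem_edgeSet).mpr hab)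
  · rintro ⟨h1, h2⟩
    exact ⟨h1, fun h => h2 h.1⟩

lemma forest_card {V : Type*} [Fintype V] :
    ∀ (k : ℕ) (H : SimpleGraph V), H.IsAcyclic → H.edgeSet.ncard = k →
      H.edgeSet.ncard + Nat.card H.ConnectedComponent = Fintype.card V := by
  intro k
  induction k with
  | zero =>
    intro H _ hk
    have : H = ⊥ := by
      rw [← edgeSet_eq_empty]
      exact (Set.ncard_eq_zero (Set.toFinite _)).mp hk
    subst this
    rw [hk, bot_cc_card, Nat.zero_add]
  | succ k ih =>
    intro H hac hk
    have hne : H.edgeSet.Nonempty := by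
      rw [Set.nonempty_iff_ne_empty]
      intro h
      rw [h, Set.ncard_empty] at hk
      omega
    obtain ⟨e, he⟩ := hne
    obtain ⟨⟨a, b⟩, rfl⟩ := e.exists_rep
    have hab : H.Adj a b := (H.mem_edgeSet).mp he
    have hbridge : ¬ (H \ fromEdgeSet {s(a,b)}).Reachable a b := by
      have := (isAcyclic_iff_forall_adj_isBridge.mp hac) hab
      exact isBridge_iff.mp this
    have hsplit := fun x y (h : H.Reachable x y) => reach_split (a := a) (b := b) h
    have hcc := card_cc_sdiff hab hbridge hsplit
    have hcard' : (H \ fromEdgeSet {s(a,b)}).edgeSet.ncard = k := by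
      rw [edgeSet_sdiff_single hab, Set.ncard_diff_singleton_of_mem he, hk]
      omega
    have := ih (H \ fromEdgeSet {s(a,b)}) (isAcyclic_anti sdiff_le hac) hcard'
    rw [hcard', hcc] at this
    omega

lemma cc_card_eq {V : Type*} {A B : SimpleGraph V} (hAB : A ≤ B)
    (h : ∀ u v : V, B.Reachable u v → A.Reachable u v) :
    Nat.card A.ConnectedComponent = Nat.card B.ConnectedComponent := by
  have hbij : Function.Bijective (ConnectedComponent.map (Hom.ofLE hAB)) := by
    constructor
    · intro c d hcd
      induction c using ConnectedComponent.ind with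
      | _ x =>
      induction d using ConnectedComponent.ind with
      | _ y =>
      simp only [ConnectedComponent.map_mk, Hom.ofLE_apply] at hcd
      exact ConnectedComponent.sound (h x y (ConnectedComponent.exact hcd))
    · intro d
      induction d using ConnectedComponent.ind with
      | _ y => exact ⟨A.connectedComponentMk y, rfl⟩
  exact Nat.card_congr (Equiv.ofBijective _ hbij)
lemma lg_edge_mem {V : Type*} {T : SimpleGraph V} {w : Sym2 V → ℝ} {t : ℝ} {e : Sym2 V}
    (h1 : e ∈ T.edgeSet) (h2 : w e ≤ t) : e ∈ (levelGraph T w t).edgeSet := by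
  rw [levelGraph, edgeSet_fromEdgeSet]
  exact ⟨⟨h1, h2⟩, T.not_isDiag_of_mem_edgeSet h1⟩

lemma mst_adj_reach {V : Type*} [Fintype V] {G T : SimpleGraph V} {w : Sym2 V → ℝ} {t : ℝ}
    (hTG : T ≤ G) (hT : T.IsTree)
    (hmin : ∀ T' : SimpleGraph V, T' ≤ G → T'.IsTree →
      ∑ e ∈ T.edgeFinset, w e ≤ ∑ e ∈ T'.edgeFinset, w e)
    {a b : V} (hab : G.Adj a b) (hw : w s(a,b) ≤ t) :
    (levelGraph T w t).Reachable a b := by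
  by_contra hreach
  obtain ⟨p, hp, hpu⟩ := hT.existsUnique_path a b
  have hfex : ∃ f ∈ p.edges, ¬ w f ≤ t := by
    by_contra hall
    push_neg at hall
    refine hreach ⟨p.transfer (levelGraph T w t) ?_⟩
    intro e he
    exact lg_edge_mem (p.edges_subset_edgeSet he) (hall e he)
  obtain ⟨f, hfp0, hwf0⟩ := hfex
  obtain ⟨⟨c, d⟩, rfl⟩ := f.exists_rep
  push_neg at hwf0
  have hfp : s(c,d) ∈ p.edges := hfp0
  have hwf : t < w s(c,d) := hwf0
  have hcd : T.Adj c d := p.adj_of_mem_edges hfp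
  have hTab : ¬ T.Adj a b := fun h => hreach (SimpleGraph.Adj.reachable (lg_adj.mpr ⟨h, hw⟩))
  have hne_ab : a ≠ b := hab.ne
  have hfab : s(c,d) ≠ s(a,b) := by
    intro h
    rw [h] at hwf
    linarith
  set D := T \ fromEdgeSet {s(c,d)} with hD
  -- every a-b-walk in T uses the edge s(c,d)
  have hbr : ¬ D.Reachable a b := by
    rintro ⟨q⟩
    set W : T.Walk a b := q.map (Hom.ofLE sdiff_le) with hW
    have hnot : s(c,d) ∉ W.edges := by
      intro hmem
      rw [hW, Walk.edges_map] at hmem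
      obtain ⟨e', he', heq⟩ := List.mem_map.mp hmem
      have he'cd : e' = s(c,d) := by
        rw [← heq]
        rcases e'.exists_rep with ⟨⟨x, y⟩, rfl⟩
        rfl
      rw [he'cd] at he'
      have hmem2 := q.edges_subset_edgeSet he'
      rw [hD, edgeSet_sdiff, edgeSet_fromEdgeSet] at hmem2
      exact hmem2.2 ⟨rfl, fun hdg => hcd.ne (Sym2.mk_isDiag_iff.mp hdg)⟩
    have hqp : (W.toPath : T.Walk a b) = p := hpu _ W.toPath.2
    rw [← hqp] at hfp
    exact hnot (Walk.edges_toPath_subset W hfp)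
  -- every vertex reaches c or d in D
  have hsplit : ∀ x : V, D.Reachable x c ∨ D.Reachable x d := by
    intro x
    rcases reach_split (a := c) (b := d) (hT.isConnected.preconnected x c) with
      h1 | ⟨h1, _⟩ | ⟨h1, _⟩
    · exact Or.inl h1
    · exact Or.inl h1
    · exact Or.inr h1
  obtain ⟨T', hT'⟩ : ∃ T', T' = D ⊔ fromEdgeSet {s(a,b)} := ⟨_, rfl⟩
  have hDT' : D ≤ T' := by rw [hT']; exact le_sup_left
  have habT' : T'.Adj a b := by
    rw [hT', sup_adj, fromEdgeSet_adj]
    exact Or.inr ⟨rfl, hne_ab⟩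
  have hcda : T'.Reachable c a ∧ T'.Reachable d a := by
    rcases hsplit a with ha | ha <;> rcases hsplit b with hb | hb
    · exact absurd (ha.trans hb.symm) hbr
    · exact ⟨(ha.mono hDT').symm, ((hb.mono hDT').symm.trans habT'.symm.reachable)⟩
    · exact ⟨((hb.mono hDT').symm.trans habT'.symm.reachable), (ha.mono hDT').symm⟩
    · exact absurd (ha.trans hb.symm) hbr
  have hconn : T'.Connected := by
    rw [connected_iff]
    refine ⟨?_, hT.isConnected.nonempty⟩
    intro x y
    have hx : T'.Reachable x a := by
      rcases hsplit x with h | h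
      · exact (h.mono hDT').trans hcda.1
      · exact (h.mono hDT').trans hcda.2
    have hy : T'.Reachable y a := by
      rcases hsplit y with h | h
      · exact (h.mono hDT').trans hcda.1
      · exact (h.mono hDT').trans hcda.2
    exact hx.trans hy.symm
  have hacyc : T'.IsAcyclic := by
    intro v cyc hcyc
    by_cases hmem : s(a,b) ∈ cyc.edges
    · have hadjreach := (adj_and_reachable_delete_edges_iff_exists_cycle (G := T')).mpr
        ⟨v, cyc, hcyc, hmem⟩
      have hle2 : T' \ fromEdgeSet {s(a,b)} ≤ D := by
        rw [hT']
        intro x y hxy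
        rcases hxy with ⟨hxy1 | hxy1, hxy2⟩
        · exact hxy1
        · exact absurd hxy1 hxy2
      exact hbr (hadjreach.2.mono hle2)
    · have hsub : ∀ e ∈ cyc.edges, e ∈ T.edgeSet := by
        intro e he
        have hmem2 := cyc.edges_subset_edgeSet he
        rw [hT', edgeSet_sup, hD, edgeSet_sdiff] at hmem2
        rcases hmem2 with h | h
        · exact h.1
        · exfalso
          rw [edgeSet_fromEdgeSet] at h
          rcases h with ⟨h1, -⟩
          rw [Set.mem_singleton_iff] at h1
          rw [h1] at he
          exact hmem he
      exact hT.IsAcyclic (cyc.transfer T hsub) (hcyc.transfer hsub)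
  have hT'tree : T'.IsTree := ⟨hconn, hacyc⟩
  have hT'G : T' ≤ G := by
    rw [hT']
    refine sup_le (le_trans sdiff_le hTG) ?_
    intro x y hxy
    rw [fromEdgeSet_adj, Set.mem_singleton_iff] at hxy
    rcases hxy with ⟨h1, h2⟩
    rw [Sym2.eq_iff] at h1
    rcases h1 with ⟨rfl, rfl⟩ | ⟨rfl, rfl⟩
    · exact hab
    · exact hab.symm
  have hedges : T'.edgeFinset = insert s(a,b) (T.edgeFinset.erase s(c,d)) := by
    ext e
    simp only [mem_edgeFinset, Finset.mem_insert, Finset.mem_erase,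
      hT', edgeSet_sup, hD, edgeSet_sdiff, edgeSet_fromEdgeSet, Set.mem_union,
      Set.mem_diff, Set.mem_singleton_iff, Set.mem_setOf_eq]
    constructor
    · rintro (⟨h1, h2⟩ | ⟨h1, -⟩)
      · exact Or.inr ⟨fun h => h2 ⟨h, by
          rw [h]; exact T.not_isDiag_of_mem_edgeSet ((T.mem_edgeSet).mpr hcd)⟩, h1⟩
      · exact Or.inl h1
    · rintro (rfl | ⟨h1, h2⟩)
      · exact Or.inr ⟨rfl, fun h => hne_ab (Sym2.mk_isDiag_iff.mp h)⟩
      · exact Or.inl ⟨h2, fun h => h1 h.1⟩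
  have hab_notin : s(a,b) ∉ T.edgeFinset.erase s(c,d) := by
    intro h
    exact hTab ((T.mem_edgeSet).mp (mem_edgeFinset.mp (Finset.mem_of_mem_erase h)))
  have hcd_in : s(c,d) ∈ T.edgeFinset := mem_edgeFinset.mpr ((T.mem_edgeSet).mpr hcd)
  have hsum : ∑ e ∈ T'.edgeFinset, w e = w s(a,b) + (∑ e ∈ T.edgeFinset, w e - w s(c,d)) := by
    rw [hedges, Finset.sum_insert hab_notin]
    congr 1
    rw [Finset.sum_erase_eq_sub hcd_in]
  have hfin := hmin T' hT'G hT'tree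
  rw [hsum] at hfin
  linarith

/-- for a minimum spanning tree `T` of a finite connected weighted graph `G`
and any threshold `t`, the number of edges of `T` of weight at most `t` equals `n` minus
the number of connected components of `G_{≤ t}`, and the components of the weight-`≤ t`
part of `T` coincide with those of `G_{≤ t}`. -/
theorem stmt_9 {V : Type*} [Fintype V] (n : ℕ) (hcard : Fintype.card V = n)
    (G : SimpleGraph V) (hG : G.Connected) (w : Sym2 V → ℝ)
    (T : SimpleGraph V) (hTG : T ≤ G) (hT : T.IsTree)
    (hmin : ∀ T' : SimpleGraph V, T' ≤ G → T'.IsTree →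
      ∑ e ∈ T.edgeFinset, w e ≤ ∑ e ∈ T'.edgeFinset, w e)
    (t : ℝ) :
    (T.edgeFinset.filter (fun e => w e ≤ t)).card
      = n - Nat.card (levelGraph G w t).ConnectedComponent ∧
    ∀ u v : V, (levelGraph T w t).Reachable u v ↔ (levelGraph G w t).Reachable u v := by

  have hlev_le : levelGraph T w t ≤ levelGraph G w t := by
    intro x y hxy
    rw [lg_adj] at hxy ⊢
    exact ⟨hTG hxy.1, hxy.2⟩
  have hback : ∀ u v : V, (levelGraph G w t).Reachable u v →
      (levelGraph T w t).Reachable u v := by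
    intro u v h
    obtain ⟨q⟩ := h
    induction q with
    | nil => exact Reachable.refl _
    | cons hadj p ih =>
      have h2 := lg_adj.mp hadj
      exact (mst_adj_reach hTG hT hmin h2.1 h2.2).trans ih
  refine ⟨?_, fun u v => ⟨fun h => h.mono hlev_le, hback u v⟩⟩
  have hlevT_le_T : levelGraph T w t ≤ T := fun x y hxy => (lg_adj.mp hxy).1
  have hacyc : (levelGraph T w t).IsAcyclic := isAcyclic_anti hlevT_le_T hT.IsAcyclic
  have hforest := forest_card ((levelGraph T w t).edgeSet.ncard) _ hacyc rfl
  have hccc := cc_card_eq hlev_le hback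
  have hfilter : (T.edgeFinset.filter (fun e => w e ≤ t)).card
      = (levelGraph T w t).edgeSet.ncard := by
    rw [Set.ncard_eq_toFinset_card']
    congr 1
    ext e
    rw [Set.mem_toFinset]
    simp only [Finset.mem_filter, mem_edgeFinset, Set.mem_toFinset, levelGraph,
      edgeSet_fromEdgeSet, Set.mem_diff, Set.mem_setOf_eq, Set.mem_sep_iff]
    constructor
    · rintro ⟨h1, h2⟩
      exact ⟨⟨h1, h2⟩, T.not_isDiag_of_mem_edgeSet h1⟩
    · rintro ⟨⟨h1, h2⟩, -⟩
      exact ⟨h1, h2⟩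
  rw [hfilter]
  rw [hcard, hccc] at hforest
  omega
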